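/- arXiv:2003.12661 — 2 statements merged into one kernel-verified Lean document; each statement's English description precedes it below -/
import Mathlib

section
/- The overlap graph Ov(k) is strongly connected: for any two vertices ρ, τ ∈ S_{k−1} there is a directed path in Ov(k) from ρ to τ. -/
open Filter Finset
/-- The pattern of a tuple of distinct values: the unique permutation in the same
relative order. -/
def patOf {j : ℕ} (f : Fin j → ℕ) : Equiv.Perm (Fin j) := (Tuple.sort f)⁻¹

/-- The pattern induced by the first `k` entries of a permutation of size `k+1`.
In the overlap graph `Ov(k+1)` this is the source of the edge labeled `π`. -/
def firstPat {k : ℕ} (π : Equiv.Perm (Fin (k + 1))) : Equiv.Perm (Fin k) :=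
  patOf (fun i => (π i.castSucc : ℕ))

/-- The pattern induced by the last `k` entries of a permutation of size `k+1`.
In the overlap graph `Ov(k+1)` this is the target of the edge labeled `π`. -/
def lastPat {k : ℕ} (π : Equiv.Perm (Fin (k + 1))) : Equiv.Perm (Fin k) :=
  patOf (fun i => (π i.succ : ℕ))

lemma sort_congr {j : ℕ} {f f' : Fin j → ℕ} (hinj : Function.Injective f)
    (h : ∀ a b, f a < f b ↔ f' a < f' b) : Tuple.sort f = Tuple.sort f' := by
  have hle : ∀ a b, f a ≤ f b ↔ f' a ≤ f' b := by
    intro a b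
    rw [← not_lt, ← not_lt, h]
  have hm : Monotone (f ∘ Tuple.sort f') := by
    have := Tuple.monotone_sort f'
    intro a b hab
    exact (hle _ _).2 (this hab)
  have h2 := (Tuple.comp_sort_eq_comp_iff_monotone (f := f) (σ := Tuple.sort f')).2 hm
  ext x
  exact congrArg Fin.val (hinj (congrFun h2 x)).symm

lemma patOf_congr {j : ℕ} {f f' : Fin j → ℕ} (hinj : Function.Injective f)
    (h : ∀ a b, f a < f b ↔ f' a < f' b) : patOf f = patOf f' := by
  unfold patOf; rw [sort_congr hinj h]

lemma patOf_lt_iff {j : ℕ} {f : Fin j → ℕ} (hinj : Function.Injective f) (a b : Fin j) :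
    (patOf f a : ℕ) < patOf f b ↔ f a < f b := by
  have hm : StrictMono (f ∘ Tuple.sort f) :=
    (Tuple.monotone_sort f).strictMono_of_injective (hinj.comp (Equiv.injective _))
  have key : ∀ x y : Fin j, f (Tuple.sort f x) < f (Tuple.sort f y) ↔ x < y := by
    intro x y
    simpa [Function.comp] using hm.lt_iff_lt (a := x) (b := y)
  have h2 := key ((Tuple.sort f)⁻¹ a) ((Tuple.sort f)⁻¹ b)
  simp only [Equiv.Perm.coe_inv, Equiv.apply_symm_apply] at h2
  unfold patOf
  exact Fin.lt_def.symm.trans h2.symm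

lemma patOf_coe {j : ℕ} (u : Equiv.Perm (Fin j)) : patOf (fun i => (u i : ℕ)) = u := by
  unfold patOf
  have hinj : Function.Injective (fun i => (u i : ℕ)) := by
    intro a b h
    exact u.injective (Fin.ext h)
  have hm : Monotone ((fun i => (u i : ℕ)) ∘ ⇑u⁻¹) := by
    intro a b hab
    simp only [Function.comp_apply, Equiv.Perm.coe_inv, Equiv.apply_symm_apply]
    exact hab
  have h2 := (Tuple.comp_sort_eq_comp_iff_monotone (f := fun i => (u i : ℕ)) (σ := u⁻¹)).2 hm
  have heq : (u⁻¹ : Equiv.Perm (Fin j)) = Tuple.sort (fun i => (u i : ℕ)) := by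
    ext x
    exact congrArg Fin.val (hinj (congrFun h2 x))
  rw [← heq, inv_inv]


/-- The overlap graph `Ov(k+1)` is strongly connected: any vertex `τ ∈ S_k` can be reached
from any vertex `ρ ∈ S_k` by a directed path, i.e. by repeatedly following edges
(permutations `π ∈ S_{k+1}`, going from `firstPat π` to `lastPat π`). -/
theorem overlapGraph_stronglyConnected (k : ℕ) (ρ τ : Equiv.Perm (Fin k)) :
    Relation.ReflTransGen
      (fun u v : Equiv.Perm (Fin k) =>
        ∃ π : Equiv.Perm (Fin (k + 1)), firstPat π = u ∧ lastPat π = v) ρ τ := by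
  set R := fun u v : Equiv.Perm (Fin k) =>
      ∃ π : Equiv.Perm (Fin (k + 1)), firstPat π = u ∧ lastPat π = v with hR
  -- the concatenated sequence: ρ-values (doubled) followed by τ-values (doubled + 1)
  set f : ℕ → ℕ := fun n =>
    if h : n < k then 2 * (ρ ⟨n, h⟩ : ℕ)
    else if h2 : n - k < k then 2 * (τ ⟨n - k, h2⟩ : ℕ) + 1 else 0 with hf
  have hfρ : ∀ (n : ℕ) (h : n < k), f n = 2 * (ρ ⟨n, h⟩ : ℕ) := by
    intro n h; simp [hf, h]
  have hfτ : ∀ (n : ℕ) (h1 : k ≤ n) (h2 : n - k < k), f n = 2 * (τ ⟨n - k, h2⟩ : ℕ) + 1 := by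
    intro n h1 h2; simp [hf, h2, Nat.not_lt.2 h1]
  have hfinj : ∀ m n, m < 2 * k → n < 2 * k → f m = f n → m = n := by
    intro m n hm hn hmn
    rcases lt_or_ge m k with h1 | h1 <;> rcases lt_or_ge n k with h2 | h2
    · rw [hfρ m h1, hfρ n h2] at hmn
      have := ρ.injective (Fin.ext (by omega : (ρ ⟨m, h1⟩ : ℕ) = ρ ⟨n, h2⟩))
      simpa [Fin.ext_iff] using this
    · rw [hfρ m h1, hfτ n h2 (by omega)] at hmn; omega
    · rw [hfτ m h1 (by omega), hfρ n h2] at hmn; omega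
    · rw [hfτ m h1 (by omega), hfτ n h2 (by omega)] at hmn
      have := τ.injective (Fin.ext (by omega : (τ ⟨m - k, by omega⟩ : ℕ) = τ ⟨n - k, by omega⟩))
      simp [Fin.ext_iff] at this; omega
  -- windows
  set W : ℕ → Equiv.Perm (Fin k) := fun j => patOf (fun i : Fin k => f (j + i)) with hW
  -- the step
  have hstep : ∀ j, j < k → R (W j) (W (j + 1)) := by
    intro j hj
    set g : Fin (k + 1) → ℕ := fun i => f (j + i) with hg
    have hginj : Function.Injective g := by
      intro a b hab
      have := hfinj (j + a) (j + b) (by omega) (by omega) hab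
      exact Fin.ext (by omega)
    refine ⟨patOf g, ?_, ?_⟩
    · unfold firstPat
      have h1 : patOf (fun i : Fin k => ((patOf g) i.castSucc : ℕ)) =
          patOf (fun i : Fin k => g i.castSucc) := by
        refine patOf_congr ?_ ?_
        · intro a b hab
          have := (patOf g).injective (Fin.ext hab)
          exact Fin.castSucc_injective _ this
        · intro a b
          exact patOf_lt_iff hginj a.castSucc b.castSucc
      rw [h1]
      rfl
    · unfold lastPat
      have h1 : patOf (fun i : Fin k => ((patOf g) i.succ : ℕ)) =
          patOf (fun i : Fin k => g i.succ) := by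
        refine patOf_congr ?_ ?_
        · intro a b hab
          have := (patOf g).injective (Fin.ext hab)
          exact Fin.succ_injective _ this
        · intro a b
          exact patOf_lt_iff hginj a.succ b.succ
      rw [h1, hW]
      congr 1
      funext i
      simp only [hg, Fin.val_succ]
      congr 1
      omega
  -- endpoints
  have hW0 : W 0 = ρ := by
    have : (fun i : Fin k => f (0 + i)) = fun i : Fin k => 2 * (ρ i : ℕ) := by
      funext i
      rw [Nat.zero_add, hfρ i i.isLt]
    rw [hW]
    simp only [this]
    have := patOf_congr (f := fun i : Fin k => 2 * (ρ i : ℕ))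
        (f' := fun i : Fin k => (ρ i : ℕ))
        (by intro a b hab; dsimp only at hab; exact ρ.injective (Fin.ext (by omega)))
        (by intro a b; omega)
    rw [this, patOf_coe]
  have hWk : W k = τ := by
    have : (fun i : Fin k => f (k + i)) = fun i : Fin k => 2 * (τ i : ℕ) + 1 := by
      funext i
      rw [hfτ (k + i) (by omega) (by omega)]
      have h3 : (⟨k + (i : ℕ) - k, by omega⟩ : Fin k) = i := Fin.ext (show k + (i : ℕ) - k = (i : ℕ) by omega)
      rw [h3]
    rw [hW]
    simp only [this]
    have := patOf_congr (f := fun i : Fin k => 2 * (τ i : ℕ) + 1)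
        (f' := fun i : Fin k => (τ i : ℕ))
        (by intro a b hab; dsimp only at hab; exact τ.injective (Fin.ext (by omega)))
        (by intro a b; omega)
    rw [this, patOf_coe]
  -- assemble path
  have hpath : ∀ j, j ≤ k → Relation.ReflTransGen R (W 0) (W j) := by
    intro j hj
    induction j with
    | zero => exact Relation.ReflTransGen.refl
    | succ n ih => exact (ih (by omega)).tail (hstep n (by omega))
  have := hpath k le_rfl
  rwa [hW0, hWk] at this
end

section
/- The map H ↦ P(G)_H is an order-preserving bijection between the poset of full subgraphs of a directed multigraph G (ordered by inclusion of edge sets) and the face poset of the cycle polytope P(G). -/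
open Filter Finset

variable {V E : Type*}

/-- A (non-empty) closed directed walk in the directed multigraph with edge-source map `src`
and edge-target map `tgt`: a nonempty list of edges in which the target of each edge is the
source of the next, and the target of the last edge is the source of the first. -/
def IsCycleWalk (src tgt : E → V) (c : List E) : Prop :=
  c ≠ [] ∧ c.Chain' (fun a b => tgt a = src b) ∧ c.getLast?.map tgt = c.head?.map src

/-- A simple cycle: a closed directed walk that does not repeat vertices. -/
def IsSimpleCycle (src tgt : E → V) (c : List E) : Prop :=
  IsCycleWalk src tgt c ∧ (c.map src).Nodup

/-- The normalized incidence vector `e_C` of a cycle `C`: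
its coordinate at an edge `e` is (number of occurrences of `e` in `C`)/|C|. -/
noncomputable def cycleVec [DecidableEq E] (c : List E) : E → ℝ :=
  fun e => (c.count e : ℝ) / (c.length : ℝ)

/-- The cycle polytope of a directed multigraph: the convex hull of the normalized incidence
vectors of its simple cycles. -/
noncomputable def cyclePolytope [DecidableEq E] (src tgt : E → V) : Set (E → ℝ) :=
  convexHull ℝ { x | ∃ c, IsSimpleCycle src tgt c ∧ x = cycleVec c }

/-- A set of edges `S` is a full subgraph if every edge of `S` lies on a directed cycle
using only edges of `S`. -/
def IsFullSubgraph (src tgt : E → V) (S : Set E) : Prop :=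
  ∀ e ∈ S, ∃ c, IsCycleWalk src tgt c ∧ (∀ e' ∈ c, e' ∈ S) ∧ e ∈ c

/-- `P(G)_H`: the points of the cycle polytope vanishing outside the edge set of `H`. -/
noncomputable def polytopeRestrict [DecidableEq E] (src tgt : E → V) (S : Set E) :
    Set (E → ℝ) :=
  { x ∈ cyclePolytope src tgt | ∀ e ∉ S, x e = 0 }

section Aux
open List
variable {src tgt : E → V}


lemma map_tgt_of_chain' :
    ∀ (c : List E) (h : c ≠ []), c.Chain' (fun a b => tgt a = src b) →
      c.map tgt = c.tail.map src ++ [tgt (c.getLast h)]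
  | [a], _, _ => by simp
  | a :: b :: t, _, hch => by
    have h1 : tgt a = src b := hch.rel_head
    have h2 := map_tgt_of_chain' (b :: t) (by simp) hch.tail
    simp only [List.map_cons, List.tail_cons] at *
    rw [List.getLast_cons (by simp : b :: t ≠ [])] at *
    rw [h2, h1]
    simp

lemma IsCycleWalk.closing (h : IsCycleWalk src tgt c) :
    tgt (c.getLast h.1) = src (c.head h.1) := by
  have h2 := h.2.2
  obtain ⟨a, t, rfl⟩ := List.exists_cons_of_ne_nil h.1
  rw [List.getLast?_eq_getLast h.1] at h2
  simpa using h2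

lemma IsCycleWalk.perm_map (h : IsCycleWalk src tgt c) :
    (c.map tgt).Perm (c.map src) := by
  obtain ⟨a, t, rfl⟩ := List.exists_cons_of_ne_nil h.1
  rw [map_tgt_of_chain' _ h.1 h.2.1, h.closing]
  simpa using (List.perm_append_singleton _ _).trans (List.Perm.refl _)


lemma cycle_of_chain_closes {l : List E} (hch : l.Chain' (fun a b => tgt a = src b))
    (hl : l ≠ []) {e : E} (he : e ∈ l) (hcl : src e = tgt (l.getLast hl)) :
    ∃ d, IsCycleWalk src tgt d ∧ d <:+ l := by
  obtain ⟨p, q, rfl⟩ := List.append_of_mem he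
  refine ⟨e :: q, ⟨by simp, hch.infix (⟨p, [], by simp⟩ : e :: q <:+: p ++ e :: q), ?_⟩, p, rfl⟩
  have h1 : (e :: q).getLast? = (p ++ e :: q).getLast? := by
    rw [List.getLast?_append_of_ne_nil]; simp
  have h2 : (e :: q).getLast (by simp) = (p ++ e :: q).getLast hl := by
    rw [List.getLast?_eq_getLast (by simp : e :: q ≠ []), List.getLast?_eq_getLast hl] at h1
    exact Option.some.inj h1
  rw [List.getLast?_eq_getLast (by simp : e :: q ≠ [])]
  simp only [Option.map_some, List.head?_cons]
  rw [h2]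
  exact congrArg some hcl.symm

lemma grow_step [DecidableEq E] {m : Multiset E}
    (hb : m.map src = m.map tgt) {l : List E} (hl : l ≠ [])
    (hch : l.Chain' (fun a b => tgt a = src b)) (hle : (↑l : Multiset E) ≤ m) :
    (∃ c, IsCycleWalk src tgt c ∧ (↑c : Multiset E) ≤ m) ∨
    (∃ e', ((l ++ [e'] : List E) : Multiset E) ≤ m ∧
      (l ++ [e']).Chain' (fun a b => tgt a = src b)) := by
  classical
  set v := tgt (l.getLast hl) with hv
  by_cases hex : ∃ e ∈ l, src e = v
  · obtain ⟨e, he, hcl⟩ := hex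
    obtain ⟨d, hd, hsuf⟩ := cycle_of_chain_closes hch hl he hcl
    exact Or.inl ⟨d, hd, le_trans (hsuf.sublist.subperm : d <+~ l) hle⟩
  · push_neg at hex
    have hv1 : 0 < Multiset.count v (m.map tgt) := by
      refine lt_of_lt_of_le ?_ (Multiset.count_le_of_le v (Multiset.map_le_map hle))
      refine Multiset.count_pos.2 ?_
      exact Multiset.mem_map.2 ⟨l.getLast hl, by simp [List.getLast_mem], rfl⟩
    have hex' : ∃ e' ∈ m - ↑l, src e' = v := by
      by_contra hno
      push_neg at hno
      have h4 : Multiset.count v (m.map src) = 0 := by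
        have hm : m = (m - ↑l) + ↑l := (tsub_add_cancel_of_le hle).symm
        rw [hm, Multiset.map_add, Multiset.count_add]
        have e1 : Multiset.count v ((m - ↑l).map src) = 0 :=
          Multiset.count_eq_zero.2 (fun hc => by
            obtain ⟨e', he', hre⟩ := Multiset.mem_map.1 hc; exact hno e' he' hre)
        have e2 : Multiset.count v ((↑l : Multiset E).map src) = 0 :=
          Multiset.count_eq_zero.2 (fun hc => by
            obtain ⟨e', he', hre⟩ := Multiset.mem_map.1 hc
            exact hex e' (by simpa using he') hre)
        omega
      rw [hb] at h4; omega
    obtain ⟨e', he', hsrc⟩ := hex'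
    refine Or.inr ⟨e', ?_, ?_⟩
    · have h5 : ({e'} : Multiset E) ≤ m - ↑l := Multiset.singleton_le.2 he'
      have h6 : (↑l : Multiset E) + {e'} ≤ ↑l + (m - ↑l) := add_le_add (le_refl _) h5
      rw [add_tsub_cancel_of_le hle] at h6
      rw [← Multiset.coe_singleton, Multiset.coe_add] at h6
      exact h6
    · refine List.isChain_append.2 ?_
      refine ⟨hch, List.isChain_singleton _, fun x hx y hy => ?_⟩
      rw [List.getLast?_eq_getLast hl] at hx
      simp only [List.head?_cons, Option.mem_def, Option.some.injEq] at hx hy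
      rw [← hx, ← hy, hsrc]

lemma exists_walk_of_balanced [DecidableEq E] {m : Multiset E}
    (hb : m.map src = m.map tgt) (hm : m ≠ 0) :
    ∃ c, IsCycleWalk src tgt c ∧ (↑c : Multiset E) ≤ m := by
  obtain ⟨e, he⟩ := Multiset.exists_mem_of_ne_zero hm
  have key : ∀ (n : ℕ) (l : List E), l ≠ [] →
      l.Chain' (fun a b => tgt a = src b) → (↑l : Multiset E) ≤ m →
      Multiset.card m - l.length ≤ n →
      ∃ c, IsCycleWalk src tgt c ∧ (↑c : Multiset E) ≤ m := by
    intro n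
    induction n with
    | zero =>
      intro l hl hch hle hn
      rcases grow_step hb hl hch hle with h | ⟨e', hle', _⟩
      · exact h
      · exfalso
        have hcard := Multiset.card_le_card hle'
        simp at hcard
        omega
    | succ n ih =>
      intro l hl hch hle hn
      rcases grow_step hb hl hch hle with h | ⟨e', hle', hch'⟩
      · exact h
      · refine ih (l ++ [e']) (by simp) hch' hle' ?_
        have hcard := Multiset.card_le_card hle'
        simp at hcard ⊢
        omega
  refine key (Multiset.card m) [e] (by simp) (List.isChain_singleton e) ?_ (by omega)
  simpa using Multiset.singleton_le.2 he

lemma split_walk {p q r : List E} {x y : E}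
    (hcw : IsCycleWalk src tgt (p ++ x :: q ++ y :: r)) (hxy : src x = src y) :
    IsCycleWalk src tgt (x :: q) ∧ IsCycleWalk src tgt (p ++ y :: r) := by
  have hrw : p ++ x :: q ++ y :: r = (p ++ x :: q) ++ (y :: r) := by simp
  have hch := hcw.2.1
  rw [hrw] at hch
  obtain ⟨hch1, hch2, hjun⟩ := List.isChain_append.1 hch
  obtain ⟨hchp, hchxq, hjun2⟩ := List.isChain_append.1 hch1
  have hg1 : (p ++ x :: q).getLast? = (x :: q).getLast? := by
    rw [List.getLast?_append_of_ne_nil]; simp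
  have hlast1 : tgt ((x :: q).getLast (by simp)) = src y := by
    refine hjun _ ?_ y (by simp)
    rw [hg1, List.getLast?_eq_getLast (by simp : x :: q ≠ [])]; rfl
  constructor
  · refine ⟨by simp, hchxq, ?_⟩
    rw [List.getLast?_eq_getLast (by simp : x :: q ≠ [])]
    simp only [Option.map_some, List.head?_cons]
    rw [hlast1, hxy]
  · have hgc : (p ++ x :: q ++ y :: r).getLast? = (p ++ y :: r).getLast? := by
      rw [hrw, List.getLast?_append_of_ne_nil _ (by simp : y :: r ≠ []),
        List.getLast?_append_of_ne_nil _ (by simp : y :: r ≠ [])]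
    refine ⟨by simp, ?_, ?_⟩
    · refine List.isChain_append.2 ⟨hchp, hch2, fun a ha b hb => ?_⟩
      simp only [List.head?_cons, Option.mem_def, Option.some.injEq] at hb
      have := hjun2 a ha x (by simp)
      rw [← hb, ← hxy]; exact this
    · have hclose := hcw.2.2
      rw [hgc] at hclose
      cases p with
      | nil =>
        simp only [List.nil_append, List.cons_append, List.head?_cons,
          Option.map_some] at hclose ⊢
        rw [hclose, hxy]
      | cons a p' =>
        simp only [List.cons_append, List.head?_cons] at hclose ⊢
        exact hclose

lemma exists_simple_of_walk [DecidableEq E] :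
    ∀ (n : ℕ) (c : List E), c.length ≤ n → IsCycleWalk src tgt c → ∀ e ∈ c,
      ∃ d, IsSimpleCycle src tgt d ∧ e ∈ d ∧ (↑d : Multiset E) ≤ (↑c : Multiset E) := by
  intro n
  induction n with
  | zero =>
    intro c hc hcw e he
    exact absurd (List.length_eq_zero_iff.1 (Nat.le_zero.1 hc)) hcw.1
  | succ n ih =>
    intro c hlen hcw e he
    by_cases hnd : (c.map src).Nodup
    · exact ⟨c, ⟨hcw, hnd⟩, he, le_rfl⟩
    · classical
      rw [List.nodup_iff_count_le_one] at hnd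
      push_neg at hnd
      obtain ⟨v, hv⟩ := hnd
      have hvmem : v ∈ c.map src := List.count_pos_iff.1 (by omega)
      obtain ⟨x, hx, hsx⟩ := List.mem_map.1 hvmem
      obtain ⟨p, t, rfl⟩ := List.append_of_mem hx
      have hcnt : List.count v ((p ++ x :: t).map src)
          = List.count v (p.map src) + List.count v (t.map src) + 1 := by
        simp [List.count_append, hsx]
        omega
      have hor : v ∈ p.map src ∨ v ∈ t.map src := by
        rw [hcnt] at hv
        rcases Nat.lt_or_ge 0 (List.count v (p.map src)) with h | h
        · exact Or.inl (List.count_pos_iff.1 h)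
        · refine Or.inr (List.count_pos_iff.1 ?_); omega
      have hshape : ∃ (p' q' r' : List E) (x' y' : E), src x' = src y' ∧
          p ++ x :: t = p' ++ x' :: q' ++ y' :: r' ∧
          ((x' :: q').length < (p' ++ x' :: q' ++ y' :: r').length ∧
            (p' ++ y' :: r').length < (p' ++ x' :: q' ++ y' :: r').length) := by
        rcases hor with h | h
        · obtain ⟨y, hy, hsy⟩ := List.mem_map.1 h
          obtain ⟨p₁, t₁, rfl⟩ := List.append_of_mem hy
          exact ⟨p₁, t₁, t, y, x, by rw [hsy, hsx], by simp, by simp; omega, by simp⟩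
        · obtain ⟨y, hy, hsy⟩ := List.mem_map.1 h
          obtain ⟨q₁, r₁, rfl⟩ := List.append_of_mem hy
          exact ⟨p, q₁, r₁, x, y, by rw [hsx, hsy], by simp, by simp; omega, by simp⟩
      obtain ⟨p', q', r', x', y', hxy, heq, hl1, hl2⟩ := hshape
      rw [heq] at hcw he hlen ⊢
      obtain ⟨hw1, hw2⟩ := split_walk hcw hxy
      have h0 : (p' ++ (q' ++ y' :: r')).Perm (q' ++ (p' ++ y' :: r')) := by
        have h1 := (List.perm_append_comm (l₁ := p') (l₂ := q')).append_right (y' :: r')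
        simpa [List.append_assoc] using h1
      have hperm : (p' ++ x' :: q' ++ y' :: r').Perm ((x' :: q') ++ (p' ++ y' :: r')) := by
        have h1 := (List.perm_append_comm (l₁ := p') (l₂ := x' :: q')).append_right (y' :: r')
        simpa [List.append_assoc] using h1
      have hsum : (↑(p' ++ x' :: q' ++ y' :: r') : Multiset E)
          = (↑(x' :: q') : Multiset E) + (↑(p' ++ y' :: r') : Multiset E) := by
        rw [← Multiset.coe_add]
        exact Multiset.coe_eq_coe.2 hperm
      have he' : e ∈ x' :: q' ∨ e ∈ p' ++ y' :: r' := by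
        simp only [List.mem_append, List.mem_cons] at he ⊢
        tauto
      rcases he' with hca | hca
      · obtain ⟨d, hd, hed, hdle⟩ := ih (x' :: q') (by omega) hw1 e hca
        refine ⟨d, hd, hed, hdle.trans ?_⟩
        rw [hsum]
        exact le_add_right le_rfl
      · obtain ⟨d, hd, hed, hdle⟩ := ih (p' ++ y' :: r') (by omega) hw2 e hca
        refine ⟨d, hd, hed, hdle.trans ?_⟩
        rw [hsum]
        exact le_add_left le_rfl

lemma balanced_weight_nonpos [DecidableEq E] (u : E → ℝ)
    (hcyc : ∀ c, IsSimpleCycle src tgt c → (c.map u).sum ≤ 0) :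
    ∀ (n : ℕ) (m : Multiset E), Multiset.card m ≤ n → m.map src = m.map tgt →
      ((m.map u).sum ≤ 0) := by
  intro n
  induction n with
  | zero =>
    intro m hc hb
    have : m = 0 := Multiset.card_eq_zero.1 (Nat.le_zero.1 hc)
    simp [this]
  | succ n ih =>
    intro m hc hb
    by_cases hm : m = 0
    · simp [hm]
    · obtain ⟨c, hcw, hle⟩ := exists_walk_of_balanced hb hm
      obtain ⟨e, he⟩ := List.exists_mem_of_ne_nil c hcw.1
      obtain ⟨d, hd, hed, hdle⟩ := exists_simple_of_walk c.length c le_rfl hcw e he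
      have hdm : (↑d : Multiset E) ≤ m := hdle.trans hle
      have hm2 : m = (m - ↑d) + ↑d := (tsub_add_cancel_of_le hdm).symm
      have hdb : (↑d : Multiset E).map src = (↑d : Multiset E).map tgt := by
        rw [Multiset.map_coe, Multiset.map_coe]
        exact Multiset.coe_eq_coe.2 hd.1.perm_map.symm
      have hmb : (m - ↑d).map src = (m - ↑d).map tgt := by
        have hb2 := hb
        rw [hm2, Multiset.map_add, Multiset.map_add, hdb] at hb2
        exact add_right_cancel hb2
      have hdne : 0 < Multiset.card (↑d : Multiset E) := by
        obtain ⟨a, t, rfl⟩ := List.exists_cons_of_ne_nil hd.1.1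
        simp
      have hcard : Multiset.card (m - (↑d : Multiset E)) ≤ n := by
        have h1 := congrArg Multiset.card hm2
        rw [Multiset.card_add] at h1
        omega
      have hsplit : (m.map u).sum = ((m - ↑d).map u).sum + (((↑d : Multiset E)).map u).sum := by
        conv_lhs => rw [hm2]
        rw [Multiset.map_add, Multiset.sum_add]
      have hds : (((↑d : Multiset E)).map u).sum = (d.map u).sum := by
        rw [Multiset.map_coe, Multiset.sum_coe]
      have h2 := hcyc d hd
      have h3 := ih (m - (↑d : Multiset E)) hcard hmb
      rw [hsplit, hds]
      linarith

section Poly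
open Finset
variable [Fintype E] [DecidableEq E]

noncomputable def coeffCLM (w : E → ℝ) : (E → ℝ) →L[ℝ] ℝ :=
  LinearMap.toContinuousLinearMap (∑ e : E, w e • (LinearMap.proj e : (E → ℝ) →ₗ[ℝ] ℝ))

lemma coeffCLM_apply (w : E → ℝ) (x : E → ℝ) : coeffCLM w x = ∑ e : E, w e * x e := by
  simp [coeffCLM, LinearMap.coe_toContinuousLinearMap', LinearMap.sum_apply,
    LinearMap.smul_apply, LinearMap.proj_apply, smul_eq_mul]

lemma clm_eq_sum (l : (E → ℝ) →L[ℝ] ℝ) (x : E → ℝ) :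
    l x = ∑ e : E, x e * l (fun j => if e = j then 1 else 0) := by
  conv_lhs => rw [pi_eq_sum_univ x]
  rw [map_sum]
  simp [smul_eq_mul]

lemma sum_count_nat (c : List E) : ∑ e : E, c.count e = c.length := by
  induction c with
  | nil => simp
  | cons a t ih =>
    have h1 : ∀ e : E, (a :: t).count e = t.count e + (if e = a then 1 else 0) := by
      intro e; by_cases h : e = a <;> simp [List.count_cons, h, @eq_comm _ a e]
    simp [h1, Finset.sum_add_distrib, ih]

lemma sum_count_mul (c : List E) (u : E → ℝ) :
    ∑ e : E, (c.count e : ℝ) * u e = (c.map u).sum := by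
  induction c with
  | nil => simp
  | cons a t ih =>
    have h1 : ∀ e : E, ((a :: t).count e : ℝ) * u e
        = (t.count e : ℝ) * u e + (if e = a then u e else 0) := by
      intro e; by_cases h : e = a <;> simp [List.count_cons, h, @eq_comm _ a e, add_mul]
    simp [h1, Finset.sum_add_distrib, ih, add_comm]

lemma cycleVec_nonneg (c : List E) (e : E) : 0 ≤ cycleVec c e := by
  unfold cycleVec; positivity

lemma clm_cycleVec (l : (E → ℝ) →L[ℝ] ℝ) (c : List E) (hc : c ≠ []) :
    (c.length : ℝ) * l (cycleVec c) = (c.map (fun e => l (fun j => if e = j then 1 else 0))).sum := by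
  have hlen : (c.length : ℝ) ≠ 0 := by
    simpa using (List.length_pos_iff.2 hc).ne'
  rw [clm_eq_sum l (cycleVec c), Finset.mul_sum]
  rw [← sum_count_mul c (fun e => l (fun j => if e = j then 1 else 0))]
  refine Finset.sum_congr rfl (fun e _ => ?_)
  unfold cycleVec
  field_simp

lemma mem_poly_nonneg {x : E → ℝ} (hx : x ∈ cyclePolytope src tgt) (e : E) : 0 ≤ x e := by
  have hconv : Convex ℝ {x : E → ℝ | 0 ≤ x e} := by
    intro a ha b hb s t hs ht hst
    have := add_nonneg (mul_nonneg hs ha) (mul_nonneg ht hb)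
    simpa using this
  have := convexHull_min (fun y hy => ?_) hconv hx
  · exact this
  · obtain ⟨c, hc, rfl⟩ := hy
    exact cycleVec_nonneg c e

lemma mem_poly_sum_one {x : E → ℝ} (hx : x ∈ cyclePolytope src tgt) : ∑ e : E, x e = 1 := by
  have hconv : Convex ℝ {x : E → ℝ | ∑ e : E, x e = 1} := by
    intro a ha b hb s t hs ht hst
    simp only [Set.mem_setOf_eq] at *
    have : ∑ e : E, (s • a + t • b) e = s * ∑ e : E, a e + t * ∑ e : E, b e := by
      simp [Finset.sum_add_distrib, Finset.mul_sum]
    rw [this, ha, hb]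
    simpa using hst
  have := convexHull_min (fun y hy => ?_) hconv hx
  · exact this
  · obtain ⟨c, hc, rfl⟩ := hy
    have hlen : (c.length : ℝ) ≠ 0 := by
      simpa using (List.length_pos_iff.2 hc.1.1).ne'
    simp only [Set.mem_setOf_eq]
    unfold cycleVec
    rw [← Finset.sum_div]
    rw [show ∑ e : E, (c.count e : ℝ) = (c.length : ℝ) by
      rw [← Nat.cast_sum]; exact_mod_cast congrArg Nat.cast (sum_count_nat c)]
    field_simp

lemma cycleVec_mem_poly {c : List E} (hc : IsSimpleCycle src tgt c) :
    cycleVec c ∈ cyclePolytope src tgt :=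
  subset_convexHull ℝ _ ⟨c, hc, rfl⟩

lemma mem_poly_rep {x : E → ℝ} (hx : x ∈ cyclePolytope src tgt) :
    ∃ (ι : Type) (t : Finset ι) (a : ι → ℝ) (z : ι → List E),
      (∀ i ∈ t, 0 ≤ a i) ∧ (∑ i ∈ t, a i) = 1 ∧ (∀ i ∈ t, IsSimpleCycle src tgt (z i)) ∧
      x = ∑ i ∈ t, a i • cycleVec (z i) := by
  rw [cyclePolytope, _root_.convexHull_eq] at hx
  obtain ⟨ι, t, a, z, ha, hsum, hz, hx⟩ := hx
  choose f hf1 hf2 using hz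
  refine ⟨{i // i ∈ t}, t.attach, fun i => a i.1, fun i => f i.1 i.2, fun i _ => ha i.1 i.2,
    ?_, fun i _ => hf1 i.1 i.2, ?_⟩
  · rw [Finset.sum_attach t (fun i => a i)]
    exact hsum
  · rw [← hx, Finset.centerMass_eq_of_sum_1 _ _ hsum]
    rw [← Finset.sum_attach t (fun i => a i • z i)]
    refine Finset.sum_congr rfl (fun i _ => ?_)
    rw [hf2 i.1 i.2]

end Poly

section Main
open Finset
variable [Fintype E] [DecidableEq E]

lemma restrict_exposed (S : Set E) :
    IsExposed ℝ (cyclePolytope src tgt) (polytopeRestrict src tgt S) := by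
  classical
  intro hne
  obtain ⟨x₀, hx₀P, hx₀⟩ := hne
  set w : E → ℝ := fun e => if e ∈ S then 0 else -1 with hw
  refine ⟨coeffCLM w, ?_⟩
  have hval : ∀ y ∈ cyclePolytope src tgt, coeffCLM w y ≤ 0 := by
    intro y hy
    rw [coeffCLM_apply]
    refine Finset.sum_nonpos (fun e _ => ?_)
    have hy0 := mem_poly_nonneg hy e
    by_cases h : e ∈ S
    · simp [hw, h]
    · simp only [hw, if_neg h]
      linarith
  have hzero : ∀ x : E → ℝ, (∀ e ∉ S, x e = 0) → coeffCLM w x = 0 := by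
    intro x hx
    rw [coeffCLM_apply]
    refine Finset.sum_eq_zero (fun e _ => ?_)
    by_cases h : e ∈ S
    · simp [hw, h]
    · simp [hw, h, hx e h]
  ext x
  constructor
  · rintro ⟨hxP, hxz⟩
    refine ⟨hxP, fun y hy => ?_⟩
    rw [hzero x hxz]
    exact hval y hy
  · rintro ⟨hxP, hmax⟩
    refine ⟨hxP, ?_⟩
    have h1 : coeffCLM w x = 0 := by
      refine le_antisymm (hval x hxP) ?_
      have h2 := hmax x₀ hx₀P
      rwa [hzero x₀ hx₀] at h2
    intro e heS
    rw [coeffCLM_apply] at h1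
    have hterms : ∀ e' ∈ Finset.univ, w e' * x e' ≤ 0 := by
      intro e' _
      have hy0 := mem_poly_nonneg hxP e'
      by_cases h : e' ∈ S
      · simp [hw, h]
      · simp only [hw, if_neg h]; linarith
    have h3 := (Finset.sum_eq_zero_iff_of_nonpos hterms).1 h1 e (Finset.mem_univ e)
    have h4 : w e = -1 := by simp [hw, heS]
    rw [h4] at h3
    linarith

lemma restrict_mono {S₁ S₂ : Set E} (h : S₁ ⊆ S₂) :
    polytopeRestrict src tgt S₁ ⊆ polytopeRestrict src tgt S₂ := by
  rintro x ⟨hxP, hxz⟩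
  exact ⟨hxP, fun e he => hxz e (fun hc => he (h hc))⟩

lemma cycleVec_mem_restrict {S : Set E} {d : List E} (hd : IsSimpleCycle src tgt d)
    (hdS : ∀ e' ∈ d, e' ∈ S) : cycleVec d ∈ polytopeRestrict src tgt S := by
  refine ⟨cycleVec_mem_poly hd, fun e'' he'' => ?_⟩
  have hnm : e'' ∉ d := fun hc => he'' (hdS _ hc)
  simp [cycleVec, List.count_eq_zero_of_not_mem hnm]

lemma subset_of_restrict_subset {S₁ S₂ : Set E} (h1 : IsFullSubgraph src tgt S₁)
    (hsub : polytopeRestrict src tgt S₁ ⊆ polytopeRestrict src tgt S₂) : S₁ ⊆ S₂ := by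
  intro e he
  obtain ⟨c, hcw, hcS, hec⟩ := h1 e he
  obtain ⟨d, hd, hed, hdle⟩ := exists_simple_of_walk c.length c le_rfl hcw e hec
  have hdS : ∀ e' ∈ d, e' ∈ S₁ := by
    intro e' he'
    refine hcS e' ?_
    have := Multiset.mem_of_le hdle (by simpa using he')
    simpa using this
  have hmem := hsub (cycleVec_mem_restrict hd hdS)
  by_contra heS2
  have h0 := hmem.2 e heS2
  have hpos : 0 < cycleVec d e := by
    have hc1 : 0 < d.count e := List.count_pos_iff.2 hed
    have hc2 : 0 < d.length := List.length_pos_iff.2 hd.1.1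
    unfold cycleVec
    have hc1' : (0:ℝ) < d.count e := by exact_mod_cast hc1
    have hc2' : (0:ℝ) < d.length := by exact_mod_cast hc2
    positivity
  rw [h0] at hpos
  exact lt_irrefl 0 hpos

lemma multiset_map_finset_sum {ι β : Type*} (t : Finset ι) (f : ι → Multiset E) (g : E → β) :
    (∑ i ∈ t, f i).map g = ∑ i ∈ t, (f i).map g := by
  classical
  induction t using Finset.induction_on with
  | empty => simp
  | insert a s h ih => simp [Finset.sum_insert h, ih]

lemma multiset_sum_finset_sum {ι : Type*} (t : Finset ι) (f : ι → Multiset ℝ) :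
    (∑ i ∈ t, f i).sum = ∑ i ∈ t, (f i).sum := by
  classical
  induction t using Finset.induction_on with
  | empty => simp
  | insert a s h ih => simp [Finset.sum_insert h, ih]

lemma list_sum_map_sub (d : List E) (f g : E → ℝ) :
    (d.map (fun e => f e - g e)).sum = (d.map f).sum - (d.map g).sum := by
  induction d with
  | nil => simp
  | cons a t ih => simp [ih]; ring

lemma list_sum_map_const (d : List E) (M : ℝ) :
    (d.map (fun _ => M)).sum = (d.length : ℝ) * M := by
  induction d with
  | nil => simp
  | cons a t ih => simp [ih]; ring

end Main

section Main2
open Finset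
variable [Fintype E] [DecidableEq E]

lemma cycleVec_pos {d : List E} {e : E} (hd : d ≠ []) (he : e ∈ d) : 0 < cycleVec d e := by
  have hc1 : 0 < d.count e := List.count_pos_iff.2 he
  have hc2 : 0 < d.length := List.length_pos_iff.2 hd
  have hc1' : (0:ℝ) < d.count e := by exact_mod_cast hc1
  have hc2' : (0:ℝ) < d.length := by exact_mod_cast hc2
  unfold cycleVec
  positivity

lemma max_cycle_closure {l : (E → ℝ) →L[ℝ] ℝ} {M : ℝ}
    (hub : ∀ d, IsSimpleCycle src tgt d → l (cycleVec d) ≤ M)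
    {c : List E} (hc : IsSimpleCycle src tgt c)
    (hcS : ∀ e ∈ c, ∃ d, IsSimpleCycle src tgt d ∧ e ∈ d ∧ l (cycleVec d) = M) :
    l (cycleVec c) = M := by
  classical
  set u : E → ℝ := fun e => l (fun j => if e = j then 1 else 0) - M with hu
  have hsum_u : ∀ d : List E, d ≠ [] →
      (d.map u).sum = (d.length : ℝ) * (l (cycleVec d) - M) := by
    intro d hd
    rw [hu, list_sum_map_sub, list_sum_map_const, ← clm_cycleVec l d hd]
    ring
  have hcyc' : ∀ d, IsSimpleCycle src tgt d → (d.map u).sum ≤ 0 := by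
    intro d hd
    rw [hsum_u d hd.1.1]
    have h1 := hub d hd
    have h2 : (0:ℝ) ≤ d.length := by positivity
    exact mul_nonpos_of_nonneg_of_nonpos h2 (by linarith)
  choose D hD1 hD2 hD3 using hcS
  set D' : E → List E := fun e => if h : e ∈ c then D e h else [] with hD'
  have hD'1 : ∀ e ∈ c, IsSimpleCycle src tgt (D' e) ∧ e ∈ D' e ∧ l (cycleVec (D' e)) = M := by
    intro e he
    simp only [hD', dif_pos he]
    exact ⟨hD1 e he, hD2 e he, hD3 e he⟩
  set m : Multiset E := ∑ e ∈ c.toFinset, (↑(D' e) : Multiset E) with hm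
  have hmbal : m.map src = m.map tgt := by
    rw [hm, multiset_map_finset_sum, multiset_map_finset_sum]
    refine Finset.sum_congr rfl (fun e he => ?_)
    have h := (hD'1 e (List.mem_toFinset.1 he)).1
    rw [Multiset.map_coe, Multiset.map_coe]
    exact (Multiset.coe_eq_coe.2 h.1.perm_map).symm
  have hcm : (↑c : Multiset E) ≤ m := by
    rw [Multiset.le_iff_count]
    intro x
    by_cases hx : x ∈ c
    · have h1 : Multiset.count x ↑c ≤ 1 := by
        rw [Multiset.coe_count]
        exact List.nodup_iff_count_le_one.1 hc.2.of_map x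
      have h2 : (↑(D' x) : Multiset E) ≤ m := by
        rw [hm]
        exact Finset.single_le_sum (f := fun e => (↑(D' e) : Multiset E))
          (fun i _ => zero_le) (List.mem_toFinset.2 hx)
      have h3 : 1 ≤ Multiset.count x (↑(D' x) : Multiset E) := by
        rw [Multiset.coe_count]
        exact List.count_pos_iff.2 (hD'1 x hx).2.1
      have h4 := Multiset.count_le_of_le x h2
      omega
    · have h5 : Multiset.count x (↑c : Multiset E) = 0 := by
        rw [Multiset.coe_count]
        exact List.count_eq_zero_of_not_mem hx
      omega
  have hm2 : m = (m - (↑c : Multiset E)) + ↑c := (tsub_add_cancel_of_le hcm).symm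
  have hcbal : (↑c : Multiset E).map src = (↑c : Multiset E).map tgt := by
    rw [Multiset.map_coe, Multiset.map_coe]
    exact (Multiset.coe_eq_coe.2 hc.1.perm_map).symm
  have hrest : (m - (↑c : Multiset E)).map src = (m - (↑c : Multiset E)).map tgt := by
    have hb2 := hmbal
    rw [hm2, Multiset.map_add, Multiset.map_add, hcbal] at hb2
    exact add_right_cancel hb2
  have hw := balanced_weight_nonpos u hcyc' (Multiset.card (m - (↑c : Multiset E)))
    (m - (↑c : Multiset E)) le_rfl hrest
  have hmu : (m.map u).sum = 0 := by
    rw [hm, multiset_map_finset_sum, multiset_sum_finset_sum]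
    refine Finset.sum_eq_zero (fun e he => ?_)
    obtain ⟨hd1, hd2, hd3⟩ := hD'1 e (List.mem_toFinset.1 he)
    rw [Multiset.map_coe, Multiset.sum_coe, hsum_u _ hd1.1.1, hd3]
    simp
  have hsplit : (m.map u).sum
      = ((m - (↑c : Multiset E)).map u).sum + ((↑c : Multiset E).map u).sum := by
    conv_lhs => rw [hm2]
    rw [Multiset.map_add, Multiset.sum_add]
  have hcsum : ((↑c : Multiset E).map u).sum = (c.length : ℝ) * (l (cycleVec c) - M) := by
    rw [Multiset.map_coe, Multiset.sum_coe, hsum_u c hc.1.1]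
  have hlenpos : (0:ℝ) < c.length := by exact_mod_cast List.length_pos_iff.2 hc.1.1
  have hge : 0 ≤ (c.length : ℝ) * (l (cycleVec c) - M) := by
    rw [← hcsum]
    linarith [hsplit, hmu, hw]
  have hle := hub c hc
  nlinarith [hge, hlenpos]

lemma exposed_eq_restrict {F : Set (E → ℝ)}
    (hF : IsExposed ℝ (cyclePolytope src tgt) F) :
    ∃ S : Set E, IsFullSubgraph src tgt S ∧ polytopeRestrict src tgt S = F := by
  classical
  rcases Set.eq_empty_or_nonempty F with rfl | hne
  · refine ⟨∅, fun e he => absurd he (Set.notMem_empty e), ?_⟩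
    ext x
    simp only [Set.mem_empty_iff_false, iff_false]
    rintro ⟨hxP, hz⟩
    have h1 := mem_poly_sum_one hxP
    have h2 : ∑ e : E, x e = 0 :=
      Finset.sum_eq_zero (fun e _ => hz e (Set.notMem_empty e))
    rw [h1] at h2
    exact one_ne_zero h2
  · obtain ⟨l, hl⟩ := hF hne
    obtain ⟨x₀, hx₀⟩ := hne
    set M := l x₀ with hM
    have hx₀' := hx₀
    rw [hl] at hx₀'
    have hub0 : ∀ y ∈ cyclePolytope src tgt, l y ≤ M := hx₀'.2
    have hFeq : F = {x ∈ cyclePolytope src tgt | l x = M} := by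
      rw [hl]; ext x
      constructor
      · rintro ⟨hxP, hmax⟩
        exact ⟨hxP, le_antisymm (hub0 x hxP) (hmax x₀ hx₀'.1)⟩
      · rintro ⟨hxP, heq⟩
        exact ⟨hxP, fun y hy => heq ▸ hub0 y hy⟩
    set S : Set E := {e | ∃ d, IsSimpleCycle src tgt d ∧ e ∈ d ∧ l (cycleVec d) = M} with hS
    have hub : ∀ d, IsSimpleCycle src tgt d → l (cycleVec d) ≤ M :=
      fun d hd => hub0 _ (cycleVec_mem_poly hd)
    have hfull : IsFullSubgraph src tgt S := by
      intro e he
      simp only [hS, Set.mem_setOf_eq] at he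
      obtain ⟨d, hd, hed, hdM⟩ := he
      exact ⟨d, hd.1, fun e' he' => ⟨d, hd, he', hdM⟩, hed⟩
    refine ⟨S, hfull, ?_⟩
    rw [hFeq]
    ext x
    constructor
    · rintro ⟨hxP, hz⟩
      refine ⟨hxP, ?_⟩
      obtain ⟨ι, t, a, z, ha, hsum, hz', hrep⟩ := mem_poly_rep hxP
      have hlrep : l x = ∑ i ∈ t, a i * l (cycleVec (z i)) := by
        rw [hrep, map_sum]
        refine Finset.sum_congr rfl (fun i _ => ?_)
        rw [map_smul, smul_eq_mul]
      have hxcoord : ∀ e : E, x e = ∑ i ∈ t, a i * cycleVec (z i) e := by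
        intro e
        rw [hrep]
        simp [Finset.sum_apply]
      have hkey : ∀ i ∈ t, a i ≠ 0 → l (cycleVec (z i)) = M := by
        intro i hi hai
        refine max_cycle_closure hub (hz' i hi) (fun e he => ?_)
        by_contra heS
        have hxe := hz e heS
        have hterm : ∀ j ∈ t, 0 ≤ a j * cycleVec (z j) e :=
          fun j hj => mul_nonneg (ha j hj) (cycleVec_nonneg _ _)
        have hxe' : ∑ j ∈ t, a j * cycleVec (z j) e = 0 := by
          rw [← hxcoord e]; exact hxe
        have hz0 := (Finset.sum_eq_zero_iff_of_nonneg hterm).1 hxe' i hi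
        have hpos : 0 < cycleVec (z i) e := cycleVec_pos (hz' i hi).1.1 he
        have hapos : 0 < a i := lt_of_le_of_ne (ha i hi) (Ne.symm hai)
        nlinarith
      rw [hlrep]
      have hcong : ∀ i ∈ t, a i * l (cycleVec (z i)) = a i * M := by
        intro i hi
        by_cases hai : a i = 0
        · simp [hai]
        · rw [hkey i hi hai]
      rw [Finset.sum_congr rfl hcong, ← Finset.sum_mul, hsum, one_mul]
    · rintro ⟨hxP, hlx⟩
      refine ⟨hxP, fun e heS => ?_⟩
      obtain ⟨ι, t, a, z, ha, hsum, hz', hrep⟩ := mem_poly_rep hxP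
      have hlrep : l x = ∑ i ∈ t, a i * l (cycleVec (z i)) := by
        rw [hrep, map_sum]
        refine Finset.sum_congr rfl (fun i _ => ?_)
        rw [map_smul, smul_eq_mul]
      have hiM : ∀ i ∈ t, a i ≠ 0 → l (cycleVec (z i)) = M := by
        intro i hi hai
        have h0 : ∑ i ∈ t, a i * (M - l (cycleVec (z i))) = 0 := by
          have hexp : ∀ i ∈ t, a i * (M - l (cycleVec (z i)))
              = a i * M - a i * l (cycleVec (z i)) := fun i _ => by ring
          rw [Finset.sum_congr rfl hexp, Finset.sum_sub_distrib, ← Finset.sum_mul, hsum,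
            one_mul, ← hlrep, hlx, sub_self]
        have hterm : ∀ i ∈ t, 0 ≤ a i * (M - l (cycleVec (z i))) :=
          fun i hi => mul_nonneg (ha i hi) (by linarith [hub (z i) (hz' i hi)])
        have hz0 := (Finset.sum_eq_zero_iff_of_nonneg hterm).1 h0 i hi
        have hapos : 0 < a i := lt_of_le_of_ne (ha i hi) (Ne.symm hai)
        nlinarith [hz0, hapos]
      have hxcoord : x e = ∑ i ∈ t, a i * cycleVec (z i) e := by
        rw [hrep]
        simp [Finset.sum_apply]
      rw [hxcoord]
      refine Finset.sum_eq_zero (fun i hi => ?_)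
      by_cases hai : a i = 0
      · simp [hai]
      · have hnm : e ∉ z i := by
          intro hmem
          exact heS ⟨z i, hz' i hi, hmem, hiM i hi hai⟩
        simp [cycleVec, List.count_eq_zero_of_not_mem hnm]

end Main2


end Aux

/-- The map `H ↦ P(G)_H` is an order-preserving bijection from the poset of full subgraphs
of `G` (ordered by inclusion of edge sets) onto the face poset of the cycle polytope `P(G)`
(faces = exposed faces, ordered by inclusion): every `P(G)_H` is a face, every face is
`P(G)_H` for a unique full subgraph `H`, and inclusions correspond to inclusions. -/
theorem cyclePolytope_facePoset
    [Fintype E] [DecidableEq E] (src tgt : E → V) :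
    (∀ S : Set E, IsFullSubgraph src tgt S →
        IsExposed ℝ (cyclePolytope src tgt) (polytopeRestrict src tgt S)) ∧
    (∀ F : Set (E → ℝ), IsExposed ℝ (cyclePolytope src tgt) F →
        ∃! S : Set E, IsFullSubgraph src tgt S ∧ polytopeRestrict src tgt S = F) ∧
    (∀ S₁ S₂ : Set E, IsFullSubgraph src tgt S₁ → IsFullSubgraph src tgt S₂ →
        (S₁ ⊆ S₂ ↔ polytopeRestrict src tgt S₁ ⊆ polytopeRestrict src tgt S₂)) := by
  refine ⟨fun S _ => restrict_exposed S, ?_, ?_⟩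
  · intro F hF
    obtain ⟨S, hS1, hS2⟩ := exposed_eq_restrict hF
    refine ⟨S, ⟨hS1, hS2⟩, ?_⟩
    rintro S' ⟨hS'1, hS'2⟩
    refine Set.Subset.antisymm ?_ ?_
    · exact subset_of_restrict_subset hS'1 (by rw [hS'2, ← hS2])
    · exact subset_of_restrict_subset hS1 (by rw [hS2, ← hS'2])
  · intro S₁ S₂ h1 _h2
    exact ⟨fun h => restrict_mono h, fun h => subset_of_restrict_subset h1 h⟩
end
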